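/- Let d ≥ 2, k ≥ 3, and let t, h, n, λ be positive integers with 1 ≤ t ≤ k, and let p ∈ (0, 1/2) be a real number. Suppose p^{(λ+1)d}·n ≥ 1 and n^{−1} ≥ (h/n)^{λd} · C(kn, d) · 2^{C(d, k−1)}, where C(a,b) denotes the binomial coefficient. Let G be a k-partite k-uniform hypergraph on vertex set V_1 ⊔ ⋯ ⊔ V_k with n vertices in each part and at least p·n^k edges, and suppose G is (h, (λ+1)d)-vertex-extending to V_r for all r < t. Then there exists a subhypergraph G' of G on the same vertex set with at least p^{(λ+1)d}·n^k edges that is (h, d)-vertex-extending to V_r for all r ≤ t. -/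

import Mathlib

open Finset

/-- A `k`-uniform hypergraph on vertex type `V`: a finite set of `k`-element edges. -/
structure HyperGraph (k : ℕ) (V : Type) where
  edges : Finset (Finset V)
  card_eq : ∀ e ∈ edges, e.card = k

/-- A finite set system `E` on `V` has degeneracy at most `d` if every nonempty induced
subsystem has a vertex of degree at most `d`. -/
def degenLE {V : Type} [DecidableEq V] (E : Finset (Finset V)) (d : ℕ) : Prop :=
  ∀ U : Finset V, U.Nonempty → ∃ v ∈ U, (E.filter fun e => v ∈ e ∧ e ⊆ U).card ≤ d

/-- The degeneracy of a finite set system: the least `d` such that every nonempty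
induced subsystem has minimum degree at most `d`. -/
noncomputable def degeneracy {V : Type} [DecidableEq V] (E : Finset (Finset V)) : ℕ :=
  sInf {d | degenLE E d}

namespace HyperGraph

variable {k : ℕ} {V W : Type}

/-- The edge set of the `i`-skeleton of `H`: all `(i+1)`-element subsets of edges of `H`. -/
def skeleton [DecidableEq V] (H : HyperGraph k V) (i : ℕ) : Finset (Finset V) :=
  H.edges.biUnion fun e => e.powersetCard (i + 1)

/-- The `i`-th skeletal degeneracy `d_i(H)`: the degeneracy of the `i`-skeleton of `H`. -/
noncomputable def skelDegen [DecidableEq V] (H : HyperGraph k V) (i : ℕ) : ℕ :=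
  degeneracy (H.skeleton i)

/-- The skeletal degeneracy `d_1(H)`: the degeneracy of the `1`-skeleton of `H`. -/
noncomputable def d1 [DecidableEq V] (H : HyperGraph k V) : ℕ := H.skelDegen 1

/-- `H` is `k`-partite with parts given by the fibers of `P`: every edge contains
exactly one vertex from each part. -/
def IsPartite [DecidableEq V] (H : HyperGraph k V) (P : V → Fin k) : Prop :=
  ∀ e ∈ H.edges, ∀ i : Fin k, (e.filter fun v => P v = i).card = 1

/-- `G` contains a copy of `H`. -/
def ContainsCopy [DecidableEq V] [DecidableEq W] (G : HyperGraph k W) (H : HyperGraph k V) :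
    Prop :=
  ∃ f : V → W, Function.Injective f ∧ ∀ e ∈ H.edges, e.image f ∈ G.edges

end HyperGraph

/-- The Turán number `ex(n, H)`: the maximum number of edges in a `k`-uniform hypergraph
on `n` vertices containing no copy of `H`. -/
noncomputable def turanNumber (k n : ℕ) {V : Type} [DecidableEq V] (H : HyperGraph k V) : ℕ :=
  sSup {m | ∃ G : HyperGraph k (Fin n), G.edges.card = m ∧ ¬ G.ContainsCopy H}

/-- The `q`-color Ramsey number `r(H; q)`: the least `N` such that every `q`-coloring of the
`k`-subsets of an `N`-set contains a monochromatic copy of `H`. -/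
noncomputable def ramseyNumber (k q : ℕ) {V : Type} [DecidableEq V] (H : HyperGraph k V) : ℕ :=
  sInf {N | ∀ c : Finset (Fin N) → Fin q,
    ∃ (f : V → Fin N) (i : Fin q), Function.Injective f ∧
      ∀ e ∈ H.edges, c (e.image f) = i}
/-- The edge set of the `(k-2)`-skeleton of `G` induced on vertex set `S`:
all `(k-1)`-element subsets of `S` contained in an edge of `G`. -/
def inducedSkel {k n : ℕ} (G : HyperGraph k (Fin k × Fin n)) (S : Finset (Fin k × Fin n)) :
    Finset (Finset (Fin k × Fin n)) :=
  (S.powersetCard (k - 1)).filter fun s => ∃ e ∈ G.edges, s ⊆ e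

/-- The set of mutual extensions, in part `t`, of the `(k-1)`-edges induced on `S`. -/
def mutualExt {k n : ℕ} (G : HyperGraph k (Fin k × Fin n)) (t : Fin k)
    (S : Finset (Fin k × Fin n)) : Finset (Fin k × Fin n) :=
  Finset.univ.filter fun v => v.1 = t ∧ ∀ s ∈ inducedSkel G S, insert v s ∈ G.edges

/-- `G` is `(a, d)`-vertex-extending to part `t`: every set `S` of at most `d` vertices
outside part `t` has at least `a` mutual extensions in part `t` of the `(k-1)`-edges
induced on `S`. -/
def VertexExtending {k n : ℕ} (G : HyperGraph k (Fin k × Fin n)) (a : ℝ) (d : ℕ)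
    (t : Fin k) : Prop :=
  ∀ S : Finset (Fin k × Fin n), (∀ v ∈ S, v.1 ≠ t) → S.card ≤ d →
    a ≤ ((mutualExt G t S).card : ℝ)

section DRCAux

open Finset

variable {k n : ℕ} {G : HyperGraph k (Fin k × Fin n)} {t : Fin k}

private lemma drc_card_fun_filter (m : ℕ) (A : Finset (Fin n)) :
    ((Finset.univ : Finset (Fin m → Fin n)).filter (fun f => ∀ i, f i ∈ A)).card
      = A.card ^ m := by
  classical
  have h : (Finset.univ.filter (fun f : Fin m → Fin n => ∀ i, f i ∈ A))
      = Fintype.piFinset (fun _ : Fin m => A) := by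
    ext f
    simp [Fintype.mem_piFinset]
  rw [h, Fintype.card_piFinset]
  simp

private lemma drc_mem_iff {σ : Finset (Fin k × Fin n)} {v : Fin k × Fin n} :
    v ∈ σ ↔ v.2 ∈ (σ.filter fun u => u.1 = v.1).image Prod.snd := by
  constructor
  · intro hv
    exact Finset.mem_image.mpr ⟨v, Finset.mem_filter.mpr ⟨hv, rfl⟩, rfl⟩
  · intro hv
    obtain ⟨u, hu, hu2⟩ := Finset.mem_image.mp hv
    obtain ⟨huσ, hu1⟩ := Finset.mem_filter.mp hu
    have huv : u = v := Prod.ext hu1 hu2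
    exact huv ▸ huσ

private lemma drc_partite_card_le (E : Finset (Finset (Fin k × Fin n))) (c : Fin k → ℕ)
    (hc : ∀ i, c i ≤ 1) (hE : ∀ σ ∈ E, ∀ i, (σ.filter fun v => v.1 = i).card = c i) :
    E.card ≤ ∏ i : Fin k, n ^ c i := by
  classical
  have hT : (Fintype.piFinset fun i : Fin k =>
      if c i = 0 then ({∅} : Finset (Finset (Fin n)))
      else Finset.univ.image fun a : Fin n => {a}).card = ∏ i : Fin k, n ^ c i := by
    rw [Fintype.card_piFinset]
    refine Finset.prod_congr rfl fun i _ => ?_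
    by_cases h : c i = 0
    · simp [h]
    · have h1 : c i = 1 := by have := hc i; omega
      rw [if_neg h, h1, pow_one,
        Finset.card_image_of_injective _ Finset.singleton_injective,
        Finset.card_univ, Fintype.card_fin]
  rw [← hT]
  apply Finset.card_le_card_of_injOn (fun σ => fun i => (σ.filter fun v => v.1 = i).image Prod.snd)
  · intro σ hσ
    rw [Finset.mem_coe, Fintype.mem_piFinset]
    intro i
    by_cases h : c i = 0
    · rw [if_pos h]
      have he : (σ.filter fun v => v.1 = i) = ∅ :=
        Finset.card_eq_zero.mp (by rw [hE σ hσ i, h])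
      simp [he]
    · rw [if_neg h]
      have h1 : (σ.filter fun v => v.1 = i).card = 1 := by
        rw [hE σ hσ i]; have := hc i; omega
      obtain ⟨u, hu⟩ := Finset.card_eq_one.mp h1
      beta_reduce
      rw [hu, Finset.image_singleton]
      exact Finset.mem_image.mpr ⟨u.2, Finset.mem_univ _, rfl⟩
  · intro σ1 _ σ2 _ heq
    ext v
    have h' : (σ1.filter fun u => u.1 = v.1).image Prod.snd
        = (σ2.filter fun u => u.1 = v.1).image Prod.snd := congrFun heq v.1
    rw [drc_mem_iff, drc_mem_iff, h']

private abbrev drcBase (t : Fin k) (e : Finset (Fin k × Fin n)) : Finset (Fin k × Fin n) :=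
  e.filter fun v => ¬ v.1 = t

private abbrev drcEdges {m : ℕ} (G : HyperGraph k (Fin k × Fin n)) (t : Fin k)
    (f : Fin m → Fin n) : Finset (Finset (Fin k × Fin n)) :=
  G.edges.filter fun e => ∀ i, insert (t, f i) (drcBase t e) ∈ G.edges

private abbrev drcGp {m : ℕ} (G : HyperGraph k (Fin k × Fin n)) (t : Fin k)
    (f : Fin m → Fin n) : HyperGraph k (Fin k × Fin n) :=
  ⟨drcEdges G t f, fun e he => G.card_eq e (Finset.mem_of_mem_filter e he)⟩

private abbrev drcMC (G : HyperGraph k (Fin k × Fin n)) (t : Fin k)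
    (F : Finset (Finset (Fin k × Fin n))) : Finset (Fin k × Fin n) :=
  Finset.univ.filter fun v => v.1 = t ∧ ∀ σ ∈ F, insert v σ ∈ G.edges

private lemma drc_uniq (hG : G.IsPartite Prod.fst) {e : Finset (Fin k × Fin n)}
    (he : e ∈ G.edges) {u w : Fin k × Fin n} (hu : u ∈ e) (hw : w ∈ e) (huw : u.1 = w.1) :
    u = w := by
  have h1 : (e.filter fun v => v.1 = w.1).card ≤ 1 := (hG e he w.1).le
  exact Finset.card_le_one.mp h1 u (Finset.mem_filter.mpr ⟨hu, huw⟩) w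
    (Finset.mem_filter.mpr ⟨hw, rfl⟩)

private lemma drc_exists (hG : G.IsPartite Prod.fst) {e : Finset (Fin k × Fin n)}
    (he : e ∈ G.edges) (i : Fin k) : ∃ w ∈ e, w.1 = i := by
  have h1 : (e.filter fun v => v.1 = i).card = 1 := hG e he i
  obtain ⟨w, hw⟩ := Finset.card_eq_one.mp h1
  have := Finset.mem_filter.mp (hw ▸ Finset.mem_singleton_self w)
  exact ⟨w, this.1, this.2⟩

private lemma drc_base_card (hG : G.IsPartite Prod.fst) {e : Finset (Fin k × Fin n)}
    (he : e ∈ G.edges) : (drcBase t e).card = k - 1 := by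
  have h1 : (e.filter fun v => v.1 = t).card = 1 := hG e he t
  have h2 := Finset.card_filter_add_card_filter_not (s := e) (p := fun v => v.1 = t)
  have h3 := G.card_eq e he
  have h4 : (drcBase t e).card = (e.filter fun v => ¬ v.1 = t).card := rfl
  omega

private lemma drc_base_not_t {e : Finset (Fin k × Fin n)} :
    ∀ u ∈ drcBase t e, ¬ u.1 = t := fun u hu => (Finset.mem_filter.mp hu).2

private lemma drc_eq_base (hG : G.IsPartite Prod.fst) {e σ : Finset (Fin k × Fin n)}
    (he : e ∈ G.edges) (hσe : σ ⊆ e) (hσc : σ.card = k - 1)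
    (hσt : ∀ u ∈ σ, u.1 ≠ t) : σ = drcBase t e := by
  apply Finset.eq_of_subset_of_card_le
  · intro u hu
    exact Finset.mem_filter.mpr ⟨hσe hu, hσt u hu⟩
  · rw [drc_base_card hG he, hσc]

private lemma drc_base_insert (v : Fin k × Fin n) {σ : Finset (Fin k × Fin n)}
    (hv : v.1 = t) (hσt : ∀ u ∈ σ, ¬ u.1 = t) : drcBase t (insert v σ) = σ := by
  show (insert v σ).filter (fun u => ¬ u.1 = t) = σ
  rw [Finset.filter_insert, if_neg (not_not_intro hv), Finset.filter_eq_self.mpr hσt]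

private lemma drc_mem_skel {H : HyperGraph k (Fin k × Fin n)} {S σ : Finset (Fin k × Fin n)} :
    σ ∈ inducedSkel H S ↔ σ ⊆ S ∧ σ.card = k - 1 ∧ ∃ e ∈ H.edges, σ ⊆ e := by
  rw [inducedSkel, Finset.mem_filter, Finset.mem_powersetCard, and_assoc]

private lemma drc_skel_ext (hG : G.IsPartite Prod.fst) {m : ℕ} {f : Fin m → Fin n}
    {S : Finset (Fin k × Fin n)} (hS : ∀ v ∈ S, v.1 ≠ t) {σ : Finset (Fin k × Fin n)}
    (hσ : σ ∈ inducedSkel (drcGp G t f) S) (i : Fin m) :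
    insert ((t, f i) : Fin k × Fin n) σ ∈ G.edges := by
  rw [drc_mem_skel] at hσ
  obtain ⟨hσS, hσc, e', he', hσe'⟩ := hσ
  have he'G : e' ∈ G.edges := Finset.mem_of_mem_filter e' he'
  rw [drc_eq_base hG he'G hσe' hσc (fun u hu => hS u (hσS hu))]
  exact (Finset.mem_filter.mp he').2 i

private lemma drc_ext_t (hG : G.IsPartite Prod.fst) {m : ℕ} {f : Fin m → Fin n}
    {S S' : Finset (Fin k × Fin n)} (hS' : ∀ v ∈ S', v.1 ≠ t) (hSS : S ⊆ S') :
    drcMC G t (inducedSkel (drcGp G t f) S') ⊆ mutualExt (drcGp G t f) t S := by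
  intro v hv
  rw [drcMC, Finset.mem_filter] at hv
  obtain ⟨-, hvt, hvext⟩ := hv
  rw [mutualExt, Finset.mem_filter]
  refine ⟨Finset.mem_univ v, hvt, ?_⟩
  intro σ hσ
  rw [drc_mem_skel] at hσ
  obtain ⟨hσS, hσc, e', he', hσe'⟩ := hσ
  have hσt : ∀ u ∈ σ, u.1 ≠ t := fun u hu => hS' u (hSS (hσS hu))
  have he'G : e' ∈ G.edges := Finset.mem_of_mem_filter e' he'
  have hbe : σ = drcBase t e' := drc_eq_base hG he'G hσe' hσc hσt
  have hσ' : σ ∈ inducedSkel (drcGp G t f) S' :=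
    drc_mem_skel.mpr ⟨hσS.trans hSS, hσc, e', he', hσe'⟩
  have hins : insert v σ ∈ G.edges := hvext σ hσ'
  refine Finset.mem_filter.mpr ⟨hins, fun i => ?_⟩
  rw [drc_base_insert v hvt hσt, hbe]
  exact (Finset.mem_filter.mp he').2 i

private lemma drc_ext_lt (hG : G.IsPartite Prod.fst) (hk : 3 ≤ k) {m : ℕ} {f : Fin m → Fin n}
    {r : Fin k} (hrt : ¬ r = t) {S : Finset (Fin k × Fin n)} (hS : ∀ v ∈ S, v.1 ≠ r) :
    mutualExt G r (S ∪ Finset.univ.image fun i => ((t, f i) : Fin k × Fin n))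
      ⊆ mutualExt (drcGp G t f) r S := by
  classical
  intro v hv
  rw [mutualExt, Finset.mem_filter] at hv
  obtain ⟨-, hvr, hvext⟩ := hv
  rw [mutualExt, Finset.mem_filter]
  refine ⟨Finset.mem_univ v, hvr, ?_⟩
  intro σ hσ
  rw [drc_mem_skel] at hσ
  obtain ⟨hσS, hσc, e', he', hσe'⟩ := hσ
  have he'G : e' ∈ G.edges := Finset.mem_of_mem_filter e' he'
  have he'ext : ∀ i, insert ((t, f i) : Fin k × Fin n) (drcBase t e') ∈ G.edges :=
    (Finset.mem_filter.mp he').2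
  have hσS' : σ ∈ inducedSkel G (S ∪ Finset.univ.image fun i => ((t, f i) : Fin k × Fin n)) :=
    drc_mem_skel.mpr ⟨hσS.trans Finset.subset_union_left, hσc, e', he'G, hσe'⟩
  have hins : insert v σ ∈ G.edges := hvext σ hσS'
  obtain ⟨x, hxe, hxr⟩ := drc_exists hG he'G r
  have hσx : σ = e'.erase x := by
    apply Finset.eq_of_subset_of_card_le
    · intro u hu
      exact Finset.mem_erase.mpr ⟨fun hux => hS u (hσS hu) (hux ▸ hxr), hσe' hu⟩
    · rw [Finset.card_erase_of_mem hxe, G.card_eq e' he'G, hσc]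
  obtain ⟨w, hwe, hwt⟩ := drc_exists hG he'G t
  have hwx : w ≠ x := fun hwx => hrt (by rw [← hxr, ← hwx, hwt])
  have hwσ : w ∈ σ := hσx ▸ Finset.mem_erase.mpr ⟨hwx, hwe⟩
  have huw : ∀ u ∈ σ, u.1 = t → u = w := fun u hu hut =>
    drc_uniq hG he'G (hσe' hu) hwe (by rw [hut, hwt])
  have hberase : σ.filter (fun u => ¬ u.1 = t) = σ.erase w := by
    ext u
    simp only [Finset.mem_filter, Finset.mem_erase]
    constructor
    · rintro ⟨hu, hut⟩
      exact ⟨fun huw' => hut (by rw [huw', hwt]), hu⟩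
    · rintro ⟨hne, hu⟩
      exact ⟨hu, fun hut => hne (huw u hu hut)⟩
  refine Finset.mem_filter.mpr ⟨hins, ?_⟩
  intro i
  have hvt : ¬ v.1 = t := fun hvt => hrt (by rw [← hvr, hvt])
  have hbv : drcBase t (insert v σ) = insert v (σ.erase w) := by
    show (insert v σ).filter (fun u => ¬ u.1 = t) = insert v (σ.erase w)
    rw [Finset.filter_insert, if_pos hvt, hberase]
  rw [hbv]
  have hwnot : ∀ u ∈ σ.erase w, ¬ u.1 = t := fun u hu hut =>
    (Finset.mem_erase.mp hu).1 (huw u (Finset.mem_of_mem_erase hu) hut)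
  have hτmem : insert ((t, f i) : Fin k × Fin n) (σ.erase w)
      ∈ inducedSkel G (S ∪ Finset.univ.image fun i => ((t, f i) : Fin k × Fin n)) := by
    rw [drc_mem_skel]
    refine ⟨?_, ?_, insert ((t, f i) : Fin k × Fin n) (drcBase t e'), he'ext i, ?_⟩
    · intro u hu
      rcases Finset.mem_insert.mp hu with rfl | hu
      · exact Finset.mem_union_right _ (Finset.mem_image.mpr ⟨i, Finset.mem_univ i, rfl⟩)
      · exact Finset.mem_union_left _ (hσS (Finset.mem_of_mem_erase hu))
    · have h1 : ((t, f i) : Fin k × Fin n) ∉ σ.erase w := fun hmem => hwnot _ hmem rfl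
      rw [Finset.card_insert_of_notMem h1, Finset.card_erase_of_mem hwσ, hσc]
      omega
    · intro u hu
      rcases Finset.mem_insert.mp hu with rfl | hu
      · exact Finset.mem_insert_self _ _
      · exact Finset.mem_insert_of_mem
          (Finset.mem_filter.mpr ⟨hσe' (Finset.mem_of_mem_erase hu), hwnot u hu⟩)
  have hfin := hvext _ hτmem
  rw [Finset.insert_comm] at hfin
  exact hfin

private lemma drc_edges_card_le (hG : G.IsPartite Prod.fst) : G.edges.card ≤ n ^ k := by
  have h1 := drc_partite_card_le G.edges (fun _ => 1) (fun _ => le_refl 1)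
    (fun σ hσ i => hG σ hσ i)
  simpa using h1

private lemma drc_base_image_card_le (hG : G.IsPartite Prod.fst) :
    (G.edges.image (drcBase t)).card ≤ n ^ (k - 1) := by
  classical
  have h1 : (G.edges.image (drcBase t)).card ≤ ∏ i : Fin k, n ^ (if i = t then 0 else 1) := by
    apply drc_partite_card_le _ _ (fun i => by split <;> omega)
    intro σ hσ i
    obtain ⟨e, he, rfl⟩ := Finset.mem_image.mp hσ
    show ((e.filter fun v => ¬ v.1 = t).filter fun v => v.1 = i).card = _
    rw [Finset.filter_filter]
    by_cases h : i = t
    · subst h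
      rw [if_pos rfl, Finset.card_eq_zero]
      apply Finset.filter_false_of_mem
      rintro x hx ⟨hq, hp⟩
      exact hq hp
    · rw [if_neg h, ← hG e he i]
      refine congrArg Finset.card (Finset.filter_congr ?_)
      intro x hx
      constructor
      · rintro ⟨-, h2⟩; exact h2
      · intro h2; exact ⟨fun hc => h (h2 ▸ hc : i = t), h2⟩
  have h2 : ∏ i : Fin k, n ^ (if i = t then 0 else 1) = n ^ (k - 1) := by
    rw [Finset.prod_pow_eq_pow_sum]
    congr 1
    have hsw : ∀ i : Fin k, (if i = t then 0 else 1) = if ¬ i = t then 1 else 0 := by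
      intro i; by_cases h : i = t <;> simp [h]
    rw [Finset.sum_congr rfl (fun i _ => hsw i), ← Finset.card_filter]
    have hft : (Finset.univ.filter fun i : Fin k => ¬ i = t) = Finset.univ.erase t := by
      ext i; simp [Finset.mem_erase]
    rw [hft, Finset.card_erase_of_mem (Finset.mem_univ t), Finset.card_univ, Fintype.card_fin]
  exact h2 ▸ h1

private lemma drc_fiber (hG : G.IsPartite Prod.fst) {σ : Finset (Fin k × Fin n)}
    (hσ : σ ∈ G.edges.image (drcBase t)) :
    (G.edges.filter fun e => drcBase t e = σ).card
      = (Finset.univ.filter fun j : Fin n =>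
          insert ((t, j) : Fin k × Fin n) σ ∈ G.edges).card := by
  classical
  obtain ⟨e0, he0, rfl⟩ := Finset.mem_image.mp hσ
  have himg : G.edges.filter (fun e => drcBase t e = drcBase t e0)
      = (Finset.univ.filter fun j : Fin n =>
          insert ((t, j) : Fin k × Fin n) (drcBase t e0) ∈ G.edges).image
          (fun j => insert ((t, j) : Fin k × Fin n) (drcBase t e0)) := by
    ext e
    simp only [Finset.mem_filter, Finset.mem_image, Finset.mem_univ, true_and]
    constructor
    · rintro ⟨heG, hbe⟩
      obtain ⟨w, hwe, hwt⟩ := drc_exists hG heG t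
      have hwe' : w = ((t, w.2) : Fin k × Fin n) := Prod.ext hwt rfl
      have hee : e = insert ((t, w.2) : Fin k × Fin n) (drcBase t e0) := by
        rw [← hbe]
        apply Finset.Subset.antisymm
        · intro u hu
          by_cases hut : u.1 = t
          · have huww : u = w := drc_uniq hG heG hu hwe (by rw [hut, hwt])
            rw [huww, hwe']; exact Finset.mem_insert_self _ _
          · exact Finset.mem_insert_of_mem (Finset.mem_filter.mpr ⟨hu, hut⟩)
        · exact Finset.insert_subset (hwe' ▸ hwe) (Finset.filter_subset _ _)
      exact ⟨w.2, by rw [← hee]; exact heG, hee.symm⟩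
    · rintro ⟨j, hj, rfl⟩
      exact ⟨hj, drc_base_insert _ rfl drc_base_not_t⟩
  rw [himg, Finset.card_image_of_injOn]
  intro j1 h1 j2 h2 heq
  have heq' : insert ((t, j1) : Fin k × Fin n) (drcBase t e0)
      = insert ((t, j2) : Fin k × Fin n) (drcBase t e0) := heq
  have hmem : ((t, j1) : Fin k × Fin n) ∈ insert ((t, j2) : Fin k × Fin n) (drcBase t e0) :=
    heq' ▸ Finset.mem_insert_self _ _
  rcases Finset.mem_insert.mp hmem with h | h
  · exact congrArg Prod.snd h
  · exact absurd rfl (drc_base_not_t _ h)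

private lemma drc_sum_edges (hG : G.IsPartite Prod.fst) (m : ℕ) (t : Fin k) :
    ∑ f : Fin m → Fin n, (drcEdges G t f).card
      = ∑ σ ∈ G.edges.image (drcBase t),
          ((Finset.univ.filter fun j : Fin n =>
            insert ((t, j) : Fin k × Fin n) σ ∈ G.edges).card) ^ (m + 1) := by
  classical
  have step1 : ∀ f : Fin m → Fin n, (drcEdges G t f).card
      = ∑ e ∈ G.edges, (if (∀ i, insert ((t, f i) : Fin k × Fin n) (drcBase t e) ∈ G.edges)
          then 1 else 0) := fun f => Finset.card_filter _ _
  rw [Finset.sum_congr rfl (fun f _ => step1 f), Finset.sum_comm]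
  have step2 : ∀ e ∈ G.edges,
      (∑ f : Fin m → Fin n, if (∀ i, insert ((t, f i) : Fin k × Fin n) (drcBase t e) ∈ G.edges)
          then 1 else 0)
      = ((Finset.univ.filter fun j : Fin n =>
          insert ((t, j) : Fin k × Fin n) (drcBase t e) ∈ G.edges).card) ^ m := by
    intro e _
    rw [← Finset.card_filter]
    rw [show (Finset.univ.filter fun f : Fin m → Fin n =>
          ∀ i, insert ((t, f i) : Fin k × Fin n) (drcBase t e) ∈ G.edges)
        = Finset.univ.filter (fun f : Fin m → Fin n => ∀ i, f i ∈ Finset.univ.filter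
            fun j : Fin n => insert ((t, j) : Fin k × Fin n) (drcBase t e) ∈ G.edges) from by
      ext f; simp]
    exact drc_card_fun_filter m _
  rw [Finset.sum_congr rfl step2]
  rw [← Finset.sum_fiberwise_of_maps_to (fun e he => Finset.mem_image_of_mem (drcBase t) he)
    (fun e => ((Finset.univ.filter fun j : Fin n =>
      insert ((t, j) : Fin k × Fin n) (drcBase t e) ∈ G.edges).card) ^ m)]
  apply Finset.sum_congr rfl
  intro σ hσ
  have hc : ∀ e ∈ G.edges.filter (fun e => drcBase t e = σ),
      ((Finset.univ.filter fun j : Fin n =>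
        insert ((t, j) : Fin k × Fin n) (drcBase t e) ∈ G.edges).card) ^ m
      = ((Finset.univ.filter fun j : Fin n =>
        insert ((t, j) : Fin k × Fin n) σ ∈ G.edges).card) ^ m := by
    intro e he
    rw [(Finset.mem_filter.mp he).2]
  rw [Finset.sum_congr rfl hc, Finset.sum_const, drc_fiber hG hσ, smul_eq_mul, ← pow_succ']

end DRCAux
/-- **Lemma (dependent random choice step).** Let `d ≥ 2`, `k ≥ 3`, `t ∈ [k]`,
`h, n, λ ≥ 1`, `p ∈ (0, 1/2)` with `p^((λ+1)d)·n ≥ 1` and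
`(h/n)^(λd)·C(kn,d)·2^C(d,k−1) ≤ n⁻¹`. If `G` is `k`-partite `k`-uniform with `n`
vertices in each part, at least `p·n^k` edges, and `(h,(λ+1)d)`-vertex-extending to
every part before `t`, then some subhypergraph `G'` on the same vertex set has at least
`p^((λ+1)d)·n^k` edges and is `(h,d)`-vertex-extending to every part up to `t`. -/
theorem dependent_random_choice_step (d k h n lam : ℕ) (t : Fin k)
    (hd : 2 ≤ d) (hk : 3 ≤ k) (hh : 1 ≤ h) (hn : 1 ≤ n) (hlam : 1 ≤ lam)
    (p : ℝ) (hp0 : 0 < p) (hp : p < 1 / 2)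
    (h1 : 1 ≤ p ^ ((lam + 1) * d) * (n : ℝ))
    (h2 : ((h : ℝ) / (n : ℝ)) ^ (lam * d) * ((Nat.choose (k * n) d : ℕ) : ℝ) *
        (2 : ℝ) ^ (Nat.choose d (k - 1)) ≤ ((n : ℝ))⁻¹)
    (G : HyperGraph k (Fin k × Fin n)) (hG : G.IsPartite Prod.fst)
    (hE : p * (n : ℝ) ^ k ≤ (G.edges.card : ℝ))
    (hext : ∀ r : Fin k, r < t → VertexExtending G (h : ℝ) ((lam + 1) * d) r) :
    ∃ G' : HyperGraph k (Fin k × Fin n), G'.edges ⊆ G.edges ∧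
      p ^ ((lam + 1) * d) * (n : ℝ) ^ k ≤ (G'.edges.card : ℝ) ∧
      ∀ r : Fin k, r ≤ t → VertexExtending G' (h : ℝ) d r  := by
  classical
  have hn0 : (0:ℝ) < (n:ℝ) := by exact_mod_cast hn
  have hp1 : p < 1 := hp.trans (by norm_num)
  set m := lam * d with hm
  have hLm : (lam + 1) * d = m + d := by rw [hm]; ring
  have h2L : ((2:ℝ)) ^ ((lam+1)*d) ≤ (n:ℝ) := by
    have hpl : p ^ ((lam+1)*d) ≤ (1/2:ℝ) ^ ((lam+1)*d) := pow_le_pow_left₀ hp0.le hp.le _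
    have h1' : (1:ℝ) ≤ (1/2:ℝ) ^ ((lam+1)*d) * n :=
      le_trans h1 (mul_le_mul_of_nonneg_right hpl hn0.le)
    have hhalf : ((1:ℝ)/2) ^ ((lam+1)*d) = ((2:ℝ) ^ ((lam+1)*d))⁻¹ := by
      rw [div_pow, one_pow, one_div]
    rw [hhalf, inv_mul_eq_div, le_div_iff₀ (by positivity)] at h1'
    linarith
  have hdn : d < n := by
    have hnat : 2 ^ ((lam+1)*d) ≤ n := by exact_mod_cast h2L
    have hd2 : d < 2 ^ d := Nat.lt_two_pow_self
    have hd3 : (2:ℕ) ^ d ≤ 2 ^ ((lam+1)*d) :=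
      Nat.pow_le_pow_right (by norm_num) (Nat.le_mul_of_pos_left d (by omega))
    omega
  set Vmt : Finset (Fin k × Fin n) := Finset.univ.filter (fun v => ¬ v.1 = t) with hVmt
  have hVmtcard : Vmt.card = (k - 1) * n := by
    have hprod : Vmt = ((Finset.univ.filter fun i : Fin k => ¬ i = t) ×ˢ
        (Finset.univ : Finset (Fin n))) := by
      ext ⟨a, b⟩
      simp [hVmt, Finset.mem_product]
    have hft : (Finset.univ.filter fun i : Fin k => ¬ i = t) = Finset.univ.erase t := by
      ext i; simp [Finset.mem_erase]
    rw [hprod, Finset.card_product, hft, Finset.card_erase_of_mem (Finset.mem_univ t)]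
    simp
  set goodP : (Fin m → Fin n) → Prop := fun f =>
    ∀ S ∈ Vmt.powersetCard d, h ≤ (drcMC G t (inducedSkel (drcGp G t f) S)).card with hgoodP
  set bad : Finset (Fin m → Fin n) := Finset.univ.filter (fun f => ¬ goodP f) with hbad
  have badCount : bad.card ≤ Nat.choose (k*n) d * 2 ^ Nat.choose d (k-1) * h ^ m := by
    have hsub : bad ⊆ (Vmt.powersetCard d).biUnion fun S =>
        ((inducedSkel G S).powerset.filter fun F => (drcMC G t F).card < h).biUnion fun F =>
          Finset.univ.filter fun f : Fin m → Fin n =>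
            ∀ i, f i ∈ (Finset.univ.filter fun j : Fin n =>
              ((t, j) : Fin k × Fin n) ∈ drcMC G t F) := by
      intro f hf
      rw [hbad, Finset.mem_filter] at hf
      have hng : ¬ goodP f := hf.2
      rw [hgoodP] at hng
      simp only [not_forall, Classical.not_imp, not_le] at hng
      obtain ⟨S, hSmem, hSbad⟩ := hng
      have hSsub : ∀ v ∈ S, v.1 ≠ t := by
        intro v hv
        have hmem := (Finset.mem_powersetCard.mp hSmem).1 hv
        rw [hVmt, Finset.mem_filter] at hmem
        exact hmem.2
      refine Finset.mem_biUnion.mpr ⟨S, hSmem, Finset.mem_biUnion.mpr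
        ⟨inducedSkel (drcGp G t f) S, ?_, ?_⟩⟩
      · rw [Finset.mem_filter, Finset.mem_powerset]
        refine ⟨?_, hSbad⟩
        intro σ hσ
        rw [drc_mem_skel] at hσ ⊢
        obtain ⟨a, b, e', he', c⟩ := hσ
        exact ⟨a, b, e', Finset.mem_of_mem_filter e' he', c⟩
      · rw [Finset.mem_filter]
        refine ⟨Finset.mem_univ f, fun i => ?_⟩
        rw [Finset.mem_filter]
        refine ⟨Finset.mem_univ _, ?_⟩
        rw [drcMC, Finset.mem_filter]
        exact ⟨Finset.mem_univ _, rfl, fun σ hσ => drc_skel_ext hG hSsub hσ i⟩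
    refine le_trans (Finset.card_le_card hsub) (le_trans Finset.card_biUnion_le ?_)
    have hinner : ∀ S ∈ Vmt.powersetCard d,
        (((inducedSkel G S).powerset.filter fun F => (drcMC G t F).card < h).biUnion fun F =>
          Finset.univ.filter fun f : Fin m → Fin n =>
            ∀ i, f i ∈ (Finset.univ.filter fun j : Fin n =>
              ((t, j) : Fin k × Fin n) ∈ drcMC G t F)).card
        ≤ 2 ^ Nat.choose d (k-1) * h ^ m := by
      intro S hS
      refine le_trans Finset.card_biUnion_le ?_
      have hFbound : ∀ F ∈ (inducedSkel G S).powerset.filter (fun F => (drcMC G t F).card < h),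
          (Finset.univ.filter fun f : Fin m → Fin n =>
            ∀ i, f i ∈ (Finset.univ.filter fun j : Fin n =>
              ((t, j) : Fin k × Fin n) ∈ drcMC G t F)).card ≤ h ^ m := by
        intro F hF
        rw [drc_card_fun_filter]
        apply Nat.pow_le_pow_left
        have hinj : (Finset.univ.filter fun j : Fin n =>
            ((t, j) : Fin k × Fin n) ∈ drcMC G t F).card ≤ (drcMC G t F).card :=
          Finset.card_le_card_of_injOn (fun j => ((t, j) : Fin k × Fin n))
            (fun j hj => (Finset.mem_filter.mp hj).2)
            (fun a _ b _ hab => congrArg Prod.snd hab)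
        have hlt := (Finset.mem_filter.mp hF).2
        omega
      refine le_trans (Finset.sum_le_sum hFbound) ?_
      rw [Finset.sum_const, smul_eq_mul]
      apply Nat.mul_le_mul_right
      refine le_trans (Finset.card_le_card (Finset.filter_subset _ _)) ?_
      rw [Finset.card_powerset]
      apply Nat.pow_le_pow_right (by norm_num)
      have hskelsub : inducedSkel G S ⊆ S.powersetCard (k-1) := by
        intro σ hσ
        rw [inducedSkel, Finset.mem_filter] at hσ
        exact hσ.1
      refine le_trans (Finset.card_le_card hskelsub) ?_
      rw [Finset.card_powersetCard, (Finset.mem_powersetCard.mp hS).2]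
    refine le_trans (Finset.sum_le_sum hinner) ?_
    rw [Finset.sum_const, smul_eq_mul, Finset.card_powersetCard, ← mul_assoc]
    have hVle : Vmt.card ≤ k * n := by
      have := Finset.card_le_univ Vmt
      rwa [Fintype.card_prod, Fintype.card_fin, Fintype.card_fin] at this
    exact Nat.mul_le_mul_right _ (Nat.mul_le_mul_right _ (Nat.choose_le_choose d hVle))
  -- expected count of surviving edges
  set β := G.edges.image (drcBase t) with hβ
  have hGne : G.edges.Nonempty := by
    have hpos : (0:ℝ) < p * (n:ℝ)^k := by positivity
    have hcard : (0:ℝ) < (G.edges.card : ℝ) := lt_of_lt_of_le hpos hE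
    exact Finset.card_pos.mp (by exact_mod_cast hcard)
  have hβne : β.Nonempty := hGne.image _
  have hsumNv : ∑ σ ∈ β, (Finset.univ.filter fun j : Fin n =>
      insert ((t, j) : Fin k × Fin n) σ ∈ G.edges).card = G.edges.card := by
    rw [Finset.card_eq_sum_card_fiberwise (f := drcBase t) (t := β)
      (fun e he => Finset.mem_image_of_mem _ he)]
    exact Finset.sum_congr rfl fun σ hσ => (drc_fiber hG hσ).symm
  have hmain : (p:ℝ)^(m+1) * (n:ℝ)^(k+m) ≤ ∑ f : Fin m → Fin n, ((drcEdges G t f).card : ℝ) := by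
    have hsum2 : ∑ f : Fin m → Fin n, ((drcEdges G t f).card : ℝ)
        = ∑ σ ∈ β, ((Finset.univ.filter fun j : Fin n =>
            insert ((t, j) : Fin k × Fin n) σ ∈ G.edges).card : ℝ) ^ (m+1) := by
      have hds := drc_sum_edges hG m t
      calc ∑ f : Fin m → Fin n, ((drcEdges G t f).card : ℝ)
          = ((∑ f : Fin m → Fin n, (drcEdges G t f).card : ℕ) : ℝ) := by push_cast; rfl
        _ = ((∑ σ ∈ β, ((Finset.univ.filter fun j : Fin n =>
              insert ((t, j) : Fin k × Fin n) σ ∈ G.edges).card) ^ (m+1) : ℕ) : ℝ) := by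
            rw [hds]
        _ = _ := by push_cast; rfl
    rw [hsum2]
    have hpow := pow_sum_div_card_le_sum_pow (s := β)
      (f := fun σ => ((Finset.univ.filter fun j : Fin n =>
        insert ((t, j) : Fin k × Fin n) σ ∈ G.edges).card : ℝ))
      (fun _ _ => Nat.cast_nonneg _) m
    have hsumNvR : ∑ σ ∈ β, ((Finset.univ.filter fun j : Fin n =>
        insert ((t, j) : Fin k × Fin n) σ ∈ G.edges).card : ℝ) = (G.edges.card : ℝ) := by
      exact_mod_cast hsumNv
    rw [hsumNvR] at hpow
    refine le_trans ?_ hpow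
    have hβle : (β.card : ℝ) ≤ (n:ℝ)^(k-1) := by exact_mod_cast drc_base_image_card_le hG
    have hβpos : (0:ℝ) < (β.card : ℝ)^m := by
      have hc := Finset.card_pos.mpr hβne
      have : (0:ℝ) < (β.card : ℝ) := by exact_mod_cast hc
      positivity
    have e2 : ((p * (n:ℝ)^k)^(m+1)) / (((n:ℝ)^(k-1))^m)
        ≤ ((G.edges.card:ℝ))^(m+1) / ((β.card:ℝ))^m :=
      div_le_div₀ (by positivity) (pow_le_pow_left₀ (by positivity) hE _) hβpos
        (pow_le_pow_left₀ (Nat.cast_nonneg _) hβle m)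
    refine le_trans (le_of_eq ?_) e2
    have hexp : k * (m + 1) = (k + m) + (k - 1) * m := by
      obtain ⟨k', rfl⟩ := Nat.exists_eq_add_of_le (show 1 ≤ k by omega)
      simp only [Nat.add_sub_cancel_left]
      ring
    have hnne : ((n:ℝ))^((k-1)*m) ≠ 0 := by positivity
    calc p^(m+1) * (n:ℝ)^(k+m)
        = p^(m+1) * (n:ℝ)^(k+m) * (n:ℝ)^((k-1)*m) / (n:ℝ)^((k-1)*m) :=
          (mul_div_cancel_right₀ _ hnne).symm
      _ = (p * (n:ℝ)^k)^(m+1) / ((n:ℝ)^(k-1))^m := by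
          rw [mul_pow, ← pow_mul (n:ℝ) k (m+1), hexp, pow_add (n:ℝ) (k+m) ((k-1)*m),
            ← pow_mul (n:ℝ) (k-1) m]
          ring
  have hbadR : (bad.card : ℝ) * (n:ℝ)^k ≤ (n:ℝ)^(k+m) * (n:ℝ)⁻¹ := by
    have hb1 : (bad.card : ℝ)
        ≤ ((Nat.choose (k*n) d : ℕ) : ℝ) * 2 ^ Nat.choose d (k-1) * (h:ℝ) ^ m := by
      exact_mod_cast badCount
    have hb3 : ((Nat.choose (k*n) d : ℕ):ℝ) * 2 ^ Nat.choose d (k-1) * (h:ℝ)^m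
        ≤ (n:ℝ)^m * (n:ℝ)⁻¹ := by
      have hnm : (0:ℝ) < (n:ℝ)^m := by positivity
      have hmul := mul_le_mul_of_nonneg_right h2 (le_of_lt hnm)
      calc ((Nat.choose (k*n) d : ℕ):ℝ) * 2 ^ Nat.choose d (k-1) * (h:ℝ)^m
          = (((h:ℝ)/(n:ℝ))^m * ((Nat.choose (k*n) d : ℕ):ℝ) * 2^(Nat.choose d (k-1)))
              * (n:ℝ)^m := by
            rw [div_pow]
            field_simp
        _ ≤ (n:ℝ)⁻¹ * (n:ℝ)^m := hmul
        _ = (n:ℝ)^m * (n:ℝ)⁻¹ := mul_comm _ _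
    calc (bad.card : ℝ) * (n:ℝ)^k ≤ ((n:ℝ)^m * (n:ℝ)⁻¹) * (n:ℝ)^k :=
          mul_le_mul_of_nonneg_right (le_trans hb1 hb3) (by positivity)
      _ = (n:ℝ)^(k+m) * (n:ℝ)⁻¹ := by rw [pow_add]; ring
  have hinv : (n:ℝ)⁻¹ ≤ p ^ ((lam+1)*d) := by
    rw [← one_div, div_le_iff₀ hn0]
    exact h1
  have h2p : p ^ ((lam+1)*d) + (n:ℝ)⁻¹ ≤ p ^ (m+1) := by
    have hle : m + 2 ≤ (lam+1)*d := by rw [hLm]; omega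
    have ha : p ^ ((lam+1)*d) ≤ p ^ (m+2) := pow_le_pow_of_le_one hp0.le hp1.le hle
    have hb : p ^ (m+2) = p^(m+1) * p := pow_succ p (m+1)
    have hc : p^(m+1) * p ≤ p^(m+1) * (1/2) :=
      mul_le_mul_of_nonneg_left hp.le (pow_nonneg hp0.le _)
    have hL2 : p ^ ((lam+1)*d) ≤ p^(m+1) * (1/2) := le_trans ha (hb ▸ hc)
    linarith [hinv]
  have hNE : Nonempty (Fin m → Fin n) := ⟨fun _ => ⟨0, hn⟩⟩
  have hsumite : ∑ f : Fin m → Fin n, (if goodP f then (0:ℝ) else (n:ℝ)^k)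
      = (bad.card : ℝ) * (n:ℝ)^k := by
    have hsw : ∀ f : Fin m → Fin n,
        (if goodP f then (0:ℝ) else (n:ℝ)^k) = (if ¬ goodP f then (n:ℝ)^k else 0) := by
      intro f; by_cases hgf : goodP f <;> simp [hgf]
    rw [Finset.sum_congr rfl fun f _ => hsw f, ← Finset.sum_filter, ← hbad,
      Finset.sum_const, nsmul_eq_mul]
  have htotal : ∑ f : Fin m → Fin n, (p ^ ((lam+1)*d) * (n:ℝ)^k)
      ≤ ∑ f : Fin m → Fin n,
          (((drcEdges G t f).card : ℝ) - (if goodP f then (0:ℝ) else (n:ℝ)^k)) := by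
    rw [Finset.sum_sub_distrib, hsumite, Finset.sum_const, Finset.card_univ, Fintype.card_fun,
      Fintype.card_fin, Fintype.card_fin, nsmul_eq_mul]
    push_cast
    have hstep : ((n:ℝ))^m * (p ^ ((lam+1)*d) * (n:ℝ)^k) = p ^ ((lam+1)*d) * (n:ℝ)^(k+m) := by
      rw [pow_add]; ring
    rw [hstep]
    have hkm : (0:ℝ) < (n:ℝ)^(k+m) := by positivity
    nlinarith [mul_le_mul_of_nonneg_right h2p (le_of_lt hkm), hmain, hbadR]
  obtain ⟨f₀, -, hf₀⟩ := Finset.exists_le_of_sum_le Finset.univ_nonempty htotal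
  have hGple : ((drcEdges G t f₀).card : ℝ) ≤ (n:ℝ)^k := by
    have hc1 : (drcEdges G t f₀).card ≤ G.edges.card :=
      Finset.card_le_card (Finset.filter_subset _ _)
    have hc2 := drc_edges_card_le hG
    exact_mod_cast le_trans hc1 hc2
  have hgood : goodP f₀ := by
    by_contra hng
    rw [if_neg hng] at hf₀
    have hposc : (0:ℝ) < p ^ ((lam+1)*d) * (n:ℝ)^k := by positivity
    linarith
  rw [if_pos hgood, sub_zero] at hf₀
  refine ⟨drcGp G t f₀, Finset.filter_subset _ _, hf₀, ?_⟩
  intro r hrt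
  rcases hrt.lt_or_eq with hlt | heq
  · intro S hS hScard
    have hXcard : (S ∪ Finset.univ.image fun i : Fin m => ((t, f₀ i) : Fin k × Fin n)).card
        ≤ (lam+1)*d := by
      refine le_trans (Finset.card_union_le _ _) ?_
      have himg := Finset.card_image_le (s := (Finset.univ : Finset (Fin m)))
        (f := fun i => ((t, f₀ i) : Fin k × Fin n))
      rw [Finset.card_univ, Fintype.card_fin] at himg
      rw [hLm]
      omega
    have hS' : ∀ v ∈ S ∪ Finset.univ.image fun i : Fin m => ((t, f₀ i) : Fin k × Fin n),
        v.1 ≠ r := by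
      intro v hv
      rcases Finset.mem_union.mp hv with hv | hv
      · exact hS v hv
      · obtain ⟨i, -, rfl⟩ := Finset.mem_image.mp hv
        exact fun hc => (ne_of_lt hlt) hc.symm
    have hhext := hext r hlt _ hS' hXcard
    refine le_trans hhext ?_
    have hss := drc_ext_lt (t := t) (r := r) (f := f₀) hG hk (ne_of_lt hlt) hS
    exact_mod_cast Finset.card_le_card hss
  · subst heq
    intro S hS hScard
    have hSsub : S ⊆ Vmt := by
      intro v hv
      rw [hVmt, Finset.mem_filter]
      exact ⟨Finset.mem_univ _, hS v hv⟩
    have hdV : d ≤ Vmt.card := by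
      have hn' : n ≤ (k-1)*n := Nat.le_mul_of_pos_left n (by omega)
      omega
    obtain ⟨S', hSS', hS'V, hS'card⟩ := Finset.exists_subsuperset_card_eq hSsub hScard hdV
    have hgs := hgood S' (Finset.mem_powersetCard.mpr ⟨hS'V, hS'card⟩)
    have hsub := drc_ext_t (f := f₀) hG (fun v hv => by
      have hmem := hS'V hv
      rw [hVmt, Finset.mem_filter] at hmem
      exact hmem.2) hSS'
    calc ((h:ℕ):ℝ) ≤ ((drcMC G r (inducedSkel (drcGp G r f₀) S')).card : ℝ) := by
          exact_mod_cast hgs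
      _ ≤ _ := by exact_mod_cast Finset.card_le_card hsub
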